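/- Let n ≥ 1 be a natural number and let Y be a real symmetric positive definite 2×2 matrix. Then the family H ↦ exp(−2π·σ(HY)), indexed by the set of integral symmetric 2×2 matrices H with det H = −n and σ(H) ≥ 0, is summable (the series Σ_H exp(−2π·σ(HY)) converges). -/

import Mathlib

set_option maxHeartbeats 1000000

noncomputable section

open Matrix Real

/-- The indexing set: integral symmetric `2×2` matrices `H` with `det H = −n`
and `σ(H) ≥ 0`. -/
def IdxSet (n : ℕ) : Type :=
  {H : Matrix (Fin 2) (Fin 2) ℤ // H.IsSymm ∧ H.det = -(n : ℤ) ∧ 0 ≤ H.trace}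

/-- Key real inequality: a uniform lower linear bound on `a y₁ + 2 b y₂ + c y₃`. -/
lemma key_bound (N : ℝ) (hN : 0 ≤ N) (y1 y2 y3 : ℝ) (h1 : 0 < y1) (h3 : 0 < y3)
    (hd : y2 ^ 2 < y1 * y3) :
    ∃ δ > 0, ∃ C : ℝ, ∀ a b c : ℝ, 0 ≤ a + c → b ^ 2 = a * c + N →
      δ * (|a| + |c|) - C ≤ a * y1 + 2 * b * y2 + c * y3 := by
  set δ : ℝ := min (min y1 y3) ((y1 * y3 - y2 ^ 2) / (y1 + y3)) / 2 with hδdef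
  have hδpos : 0 < δ := by
    have : 0 < (y1 * y3 - y2 ^ 2) / (y1 + y3) := div_pos (by linarith) (by linarith)
    have : 0 < min (min y1 y3) ((y1 * y3 - y2 ^ 2) / (y1 + y3)) := by
      simp [lt_min_iff, h1, h3, this]
    positivity
  have hδ1 : δ ≤ y1 / 2 := by
    have := min_le_left (min y1 y3) ((y1 * y3 - y2 ^ 2) / (y1 + y3))
    have := min_le_left y1 y3
    rw [hδdef]; linarith
  have hδ3 : δ ≤ y3 / 2 := by
    have := min_le_left (min y1 y3) ((y1 * y3 - y2 ^ 2) / (y1 + y3))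
    have := min_le_right y1 y3
    rw [hδdef]; linarith
  have hδd : δ * (y1 + y3) ≤ (y1 * y3 - y2 ^ 2) / 2 := by
    have h := min_le_right (min y1 y3) ((y1 * y3 - y2 ^ 2) / (y1 + y3))
    have hy13 : 0 < y1 + y3 := by linarith
    have : δ ≤ (y1 * y3 - y2 ^ 2) / (y1 + y3) / 2 := by rw [hδdef]; linarith
    calc δ * (y1 + y3) ≤ (y1 * y3 - y2 ^ 2) / (y1 + y3) / 2 * (y1 + y3) := by
          exact mul_le_mul_of_nonneg_right this hy13.le
      _ = (y1 * y3 - y2 ^ 2) / 2 := by field_simp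
  have hprod : y2 ^ 2 ≤ (y1 - δ) * (y3 - δ) := by nlinarith [sq_nonneg δ]
  refine ⟨δ, hδpos, Real.sqrt N * (y1 + y3 + 2 * |y2|), ?_⟩
  intro a b c htr hdet
  have hsN : 0 ≤ Real.sqrt N := Real.sqrt_nonneg N
  have hsN2 : Real.sqrt N ^ 2 = N := Real.sq_sqrt hN
  have hy2 : 0 ≤ |y2| := abs_nonneg y2
  have h2b : -(2 * |b| * |y2|) ≤ 2 * b * y2 := by
    have := neg_abs_le (2 * b * y2)
    have : |2 * b * y2| = 2 * |b| * |y2| := by rw [abs_mul, abs_mul]; simp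
    nlinarith [neg_abs_le (2 * b * y2)]
  rcases le_or_gt 0 (a * c) with hac | hac
  · -- both a, c ≥ 0
    have ha : 0 ≤ a := by nlinarith
    have hc : 0 ≤ c := by nlinarith
    set s : ℝ := Real.sqrt (a * c) with hs
    have hs0 : 0 ≤ s := Real.sqrt_nonneg _
    have hs2 : s ^ 2 = a * c := Real.sq_sqrt hac
    have hbs : |b| ≤ s + Real.sqrt N := by
      have h1' : b ^ 2 ≤ (s + Real.sqrt N) ^ 2 := by nlinarith
      nlinarith [abs_nonneg b, sq_abs b]
    -- AM-GM: 2 s |y2| ≤ a (y1 - δ) + c (y3 - δ)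
    set u : ℝ := y1 - δ with hudef
    set v : ℝ := y3 - δ with hvdef
    set w : ℝ := |y2| with hwdef
    have hu : 0 ≤ u := by rw [hudef]; linarith
    have hv : 0 ≤ v := by rw [hvdef]; linarith
    have hw2 : w ^ 2 ≤ u * v := by rw [hwdef, sq_abs]; exact hprod
    have hsq : (2 * s * w) ^ 2 ≤ (a * u + c * v) ^ 2 := by
      have hs2w : (2 * s * w) ^ 2 = 4 * (a * c) * w ^ 2 := by
        rw [mul_pow, mul_pow, hs2]; ring
      have hexp : (a * u + c * v) ^ 2 = (a * u - c * v) ^ 2 + 4 * (a * c) * (u * v) := by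
        ring
      have h4 : 4 * (a * c) * w ^ 2 ≤ 4 * (a * c) * (u * v) :=
        mul_le_mul_of_nonneg_left hw2 (by linarith)
      rw [hs2w, hexp]
      linarith [sq_nonneg (a * u - c * v)]
    have hamgm : 2 * s * w ≤ a * u + c * v := by
      have hX : 0 ≤ 2 * s * w := by positivity
      have hY : 0 ≤ a * u + c * v := add_nonneg (mul_nonneg ha hu) (mul_nonneg hc hv)
      have h := Real.sqrt_le_sqrt hsq
      rwa [Real.sqrt_sq hX, Real.sqrt_sq hY] at h
    have habs : |a| = a := abs_of_nonneg ha
    have hcabs : |c| = c := abs_of_nonneg hc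
    rw [habs, hcabs]
    have hb2 : |b| * w ≤ (s + Real.sqrt N) * w := mul_le_mul_of_nonneg_right hbs hy2
    have hsNy : 0 ≤ Real.sqrt N * (y1 + y3) := mul_nonneg hsN (by linarith)
    have hh2b : -(2 * |b| * w) ≤ 2 * b * y2 := h2b
    have huu : a * u = a * y1 - a * δ := by rw [hudef]; ring
    have hvv : c * v = c * y3 - c * δ := by rw [hvdef]; ring
    linarith [hamgm, hb2, hsNy, hh2b, huu, hvv]
  · -- a and c of opposite signs
    rcases le_or_gt 0 a with ha | ha
    · have hc : c < 0 := by nlinarith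
      have ha' : 0 < a := by nlinarith
      have hbN : |b| ≤ Real.sqrt N := by
        have : b ^ 2 ≤ N := by nlinarith
        nlinarith [abs_nonneg b, sq_abs b]
      have hcN : -c ≤ Real.sqrt N := by
        have hca : -c ≤ a := by linarith
        have : (-c) ^ 2 ≤ N := by nlinarith
        nlinarith
      have habs : |a| = a := abs_of_nonneg ha
      have hcabs : |c| = -c := abs_of_neg hc
      rw [habs, hcabs]
      nlinarith [mul_le_mul_of_nonneg_right hbN hy2, mul_le_mul_of_nonneg_right hcN h3.le]
    · have hc : 0 < c := by nlinarith
      have hbN : |b| ≤ Real.sqrt N := by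
        have : b ^ 2 ≤ N := by nlinarith
        nlinarith [abs_nonneg b, sq_abs b]
      have haN : -a ≤ Real.sqrt N := by
        have hca : -a ≤ c := by linarith
        have : (-a) ^ 2 ≤ N := by nlinarith
        nlinarith
      have habs : |a| = -a := abs_of_neg ha
      have hcabs : |c| = c := abs_of_nonneg hc.le
      rw [habs, hcabs]
      nlinarith [mul_le_mul_of_nonneg_right hbN hy2, mul_le_mul_of_nonneg_right haN h1.le]

/-- For `n ≥ 1` and `Y` symmetric positive definite, the series
`Σ_H exp(−2π σ(HY))` over integral symmetric `H` with `det H = −n`, `σ(H) ≥ 0`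
converges. -/
theorem statement8 (n : ℕ) (hn : 1 ≤ n) (Y : Matrix (Fin 2) (Fin 2) ℝ)
    (hY : Y.PosDef) :
    Summable fun H : IdxSet n =>
      Real.exp (-(2 * π) * ((H.val.map (Int.cast : ℤ → ℝ)) * Y).trace) := by
  have hsym : Y 1 0 = Y 0 1 := by simpa using hY.1.apply 0 1
  have h1 : 0 < Y 0 0 := by
    have hx : (![1, 0] : Fin 2 → ℝ) ≠ 0 := by
      intro h; simpa using congrFun h 0
    have := hY.dotProduct_mulVec_pos hx
    simpa [dotProduct, mulVec, Fin.sum_univ_two] using this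
  have h3 : 0 < Y 1 1 := by
    have hx : (![0, 1] : Fin 2 → ℝ) ≠ 0 := by
      intro h; simpa using congrFun h 1
    have := hY.dotProduct_mulVec_pos hx
    simpa [dotProduct, mulVec, Fin.sum_univ_two] using this
  have hdet : Y 0 1 ^ 2 < Y 0 0 * Y 1 1 := by
    have := hY.det_pos
    rw [Matrix.det_fin_two, hsym] at this
    nlinarith
  obtain ⟨δ, hδ, C, hkey⟩ := key_bound (n : ℝ) (Nat.cast_nonneg n) _ _ _ h1 h3 hdet
  set r : ℝ := Real.exp (-(2 * π * δ)) with hrdef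
  have hr0 : 0 ≤ r := (Real.exp_pos _).le
  have hr1 : r < 1 := by
    rw [hrdef, Real.exp_lt_one_iff]
    have := Real.pi_pos
    nlinarith
  -- summability over ℤ of r ^ natAbs
  have hsumZ : Summable fun a : ℤ => r ^ a.natAbs := by
    apply Summable.of_nat_of_neg
    · simpa using summable_geometric_of_lt_one hr0 hr1
    · simpa using summable_geometric_of_lt_one hr0 hr1
  have hsumZZ : Summable fun p : ℤ × ℤ => r ^ p.1.natAbs * r ^ p.2.natAbs :=
    hsumZ.mul_of_nonneg hsumZ (fun a => pow_nonneg hr0 _) fun a => pow_nonneg hr0 _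
  have hsumB : Summable fun _ : Bool => (1 : ℝ) := summable_of_finite_support (Set.toFinite _)
  have hsumg : Summable fun p : (ℤ × ℤ) × Bool =>
      Real.exp (2 * π * C) * (r ^ p.1.1.natAbs * r ^ p.1.2.natAbs) := by
    apply Summable.mul_left
    have := hsumZZ.mul_of_nonneg hsumB
      (fun p => mul_nonneg (pow_nonneg hr0 _) (pow_nonneg hr0 _)) fun _ => zero_le_one
    simpa using this
  -- the injection
  set j : IdxSet n → (ℤ × ℤ) × Bool :=
    fun H => ((H.1 0 0, H.1 1 1), decide (0 ≤ H.1 0 1)) with hjdef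
  have hjinj : Function.Injective j := by
    rintro ⟨H, hHs, hHd, hHt⟩ ⟨K, hKs, hKd, hKt⟩ h
    simp only [hjdef, Prod.mk.injEq, decide_eq_decide] at h
    obtain ⟨⟨ha, hc⟩, hbsign⟩ := h
    have hH10 : H 1 0 = H 0 1 := hHs.apply 0 1
    have hK10 : K 1 0 = K 0 1 := hKs.apply 0 1
    rw [Matrix.det_fin_two, hH10] at hHd
    rw [Matrix.det_fin_two, hK10] at hKd
    have hb : H 0 1 = K 0 1 := by
      have hsq : H 0 1 * H 0 1 = K 0 1 * K 0 1 := by rw [← ha, ← hc] at hKd; omega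
      rcases mul_self_eq_mul_self_iff.mp hsq with h' | h'
      · exact h'
      · rcases le_or_gt 0 (H 0 1) with hb0 | hb0
        · have := hbsign.mp hb0; omega
        · have : ¬ (0 ≤ K 0 1) := fun h0 => absurd (hbsign.mpr h0) (not_le.mpr hb0)
          omega
    have hHK : H = K := by
      ext i k
      fin_cases i <;> fin_cases k
      · exact ha
      · exact hb
      · show H 1 0 = K 1 0
        rw [hH10, hK10]; exact hb
      · exact hc
    exact Subtype.ext hHK
  -- comparison
  refine Summable.of_nonneg_of_le (fun H => (Real.exp_pos _).le) ?_
    (hsumg.comp_injective hjinj)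
  · intro H
    obtain ⟨M, hMs, hMd, hMt⟩ := H
    set a : ℤ := M 0 0 with hadef
    set b : ℤ := M 0 1 with hbdef
    set c : ℤ := M 1 1 with hcdef
    have hM10 : M 1 0 = M 0 1 := hMs.apply 0 1
    have htrace : ((M.map (Int.cast : ℤ → ℝ)) * Y).trace =
        (a : ℝ) * Y 0 0 + 2 * (b : ℝ) * Y 0 1 + (c : ℝ) * Y 1 1 := by
      rw [Matrix.trace_fin_two]
      simp only [Matrix.mul_apply, Fin.sum_univ_two, Matrix.map_apply, hM10, hsym]
      push_cast
      ring
    have hdet' : ((b : ℝ)) ^ 2 = (a : ℝ) * (c : ℝ) + (n : ℝ) := by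
      rw [Matrix.det_fin_two, hM10] at hMd
      have : b * b = a * c + (n : ℤ) := by linarith
      have := congrArg (Int.cast : ℤ → ℝ) this
      push_cast at this
      nlinarith [this]
    have htr' : (0 : ℝ) ≤ (a : ℝ) + (c : ℝ) := by
      rw [Matrix.trace_fin_two] at hMt
      exact_mod_cast hMt
    have hb := hkey (a : ℝ) (b : ℝ) (c : ℝ) htr' hdet'
    have hexp : -(2 * π) * ((M.map (Int.cast : ℤ → ℝ)) * Y).trace ≤
        -(2 * π) * (δ * (|(a : ℝ)| + |(c : ℝ)|) - C) := by
      rw [htrace]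
      have hπ : (0 : ℝ) < 2 * π := by positivity
      nlinarith [hb]
    have habs : |(a : ℝ)| = (a.natAbs : ℝ) := by rw [Nat.cast_natAbs, Int.cast_abs]
    have hcabs : |(c : ℝ)| = (c.natAbs : ℝ) := by rw [Nat.cast_natAbs, Int.cast_abs]
    calc Real.exp (-(2 * π) * ((M.map (Int.cast : ℤ → ℝ)) * Y).trace)
        ≤ Real.exp (-(2 * π) * (δ * (|(a : ℝ)| + |(c : ℝ)|) - C)) :=
          Real.exp_le_exp.mpr hexp
      _ = Real.exp (2 * π * C) * (r ^ a.natAbs * r ^ c.natAbs) := by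
          rw [habs, hcabs, hrdef, ← Real.exp_nat_mul, ← Real.exp_nat_mul,
            ← Real.exp_add, ← Real.exp_add]
          ring_nf
      _ = Real.exp (2 * π * C) *
          (r ^ ((j ⟨M, hMs, hMd, hMt⟩).1.1.natAbs) * r ^ ((j ⟨M, hMs, hMd, hMt⟩).1.2.natAbs)) := by
          simp [hjdef, hadef, hcdef]
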